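/- Marker lemma: Consider infinitely many markers initially at positions 1, 2, 3, ... on ℕ, moved in stages by the rule that whenever a marker moves, it jumps to the current position of the next marker, which in turn jumps to the position of the following marker, and so on (all markers with larger index shift accordingly). Let W be the set of positions eventually vacated by all markers. Then ℕ \ W is finite if and only if some marker moves infinitely often; and if N₀ is the least index of a marker that moves infinitely often, then |ℕ \ W| = N₀ - 1. -/
import Mathlib


open scoped Classical

/-- Positions of the markers. `markerPos T s i` is the position of marker `i`
(markers are indexed by `1, 2, 3, …`) after stage `s`, where `T i s` means that
marker `i` is triggered to move at stage `s`. Initially marker `i` rests on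
cell `i`. At each stage, every triggered marker jumps to the current position
of the next marker, which in turn jumps to the position of the following
marker, and so on (all markers of larger index shift accordingly, these shifts
being independent of their own triggering); thus after stage `s + 1` marker `i`
sits where marker `i + #{t ≤ i : T t (s+1)}` sat after stage `s`. -/
noncomputable def markerPos (T : ℕ → ℕ → Prop) : ℕ → ℕ → ℕ
  | 0, i => i
  | s + 1, i =>
      markerPos T s (i + ((Finset.Icc 1 i).filter (fun t => T t (s + 1))).card)

/-- Marker `i` moves infinitely often. -/
def MovesInfinitely (T : ℕ → ℕ → Prop) (i : ℕ) : Prop :=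
  {s : ℕ | markerPos T (s + 1) i ≠ markerPos T s i}.Infinite

/-- The set `W` of positions eventually vacated by all markers. -/
def markerW (T : ℕ → ℕ → Prop) : Set ℕ :=
  {p | ∃ s₀, ∀ s ≥ s₀, ∀ i, 1 ≤ i → markerPos T s i ≠ p}

namespace MarkerAux

variable (T : ℕ → ℕ → Prop)

lemma markerPos_succ (s i : ℕ) :
    markerPos T (s + 1) i
      = markerPos T s (i + ((Finset.Icc 1 i).filter (fun t => T t (s + 1))).card) := rfl

lemma card_mono {i j : ℕ} (h : i ≤ j) (s : ℕ) :
    ((Finset.Icc 1 i).filter (fun t => T t s)).card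
      ≤ ((Finset.Icc 1 j).filter (fun t => T t s)).card :=
  Finset.card_le_card (Finset.filter_subset_filter _ (Finset.Icc_subset_Icc_right h))

lemma strictMonoPos (s : ℕ) : StrictMono (markerPos T s) := by
  induction s with
  | zero => exact strictMono_id
  | succ s ih =>
      intro i j hij
      rw [markerPos_succ, markerPos_succ]
      exact ih (by have := card_mono T hij.le (s+1); omega)

lemma moves_iff (s i : ℕ) :
    markerPos T (s + 1) i ≠ markerPos T s i ↔
      ((Finset.Icc 1 i).filter (fun t => T t (s + 1))).card ≠ 0 := by
  rw [markerPos_succ]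
  constructor
  · intro h hc
    rw [hc] at h
    simp at h
  · intro hc h
    have := (strictMonoPos T s).injective h
    omega

lemma movesInf_mono {i j : ℕ} (h : i ≤ j) (hi : MovesInfinitely T i) :
    MovesInfinitely T j := by
  refine hi.mono fun s hs => ?_
  rw [Set.mem_setOf_eq, moves_iff] at hs ⊢
  have := card_mono T h (s + 1)
  omega

/-- Position `p` is occupied by some marker at stage `s`. -/
def Occupied (s p : ℕ) : Prop := ∃ i, 1 ≤ i ∧ markerPos T s i = p

lemma occupied_antitone {s p : ℕ} (h : Occupied T (s + 1) p) : Occupied T s p := by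
  obtain ⟨i, hi, hp⟩ := h
  exact ⟨i + ((Finset.Icc 1 i).filter (fun t => T t (s + 1))).card, by omega,
    by rw [← markerPos_succ]; exact hp⟩

lemma occupied_of_le {s s' p : ℕ} (h : s ≤ s') (ho : Occupied T s' p) :
    Occupied T s p := by
  induction s' with
  | zero => simpa [Nat.le_zero.mp h] using ho
  | succ n ih =>
      rcases Nat.lt_or_ge s (n + 1) with h' | h'
      · exact ih (by omega) (occupied_antitone T ho)
      · have : s = n + 1 := by omega
        rwa [this]

lemma notMem_W_iff (p : ℕ) : p ∉ markerW T ↔ ∀ s, Occupied T s p := by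
  unfold markerW
  simp only [Set.mem_setOf_eq, not_exists]
  push_neg
  constructor
  · intro h s
    obtain ⟨s', hs', i, hi, hp⟩ := h s
    exact occupied_of_le T hs' ⟨i, hi, hp⟩
  · intro h s₀
    obtain ⟨i, hi, hp⟩ := h s₀
    exact ⟨s₀, le_refl _, i, hi, hp⟩

lemma C_eq : {p : ℕ | 1 ≤ p ∧ p ∉ markerW T} = {p | ∀ s, Occupied T s p} := by
  ext p
  simp only [Set.mem_setOf_eq, notMem_W_iff]
  constructor
  · exact fun h => h.2
  · intro h
    refine ⟨?_, h⟩
    obtain ⟨i, hi, hp⟩ := h 0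
    have : markerPos T 0 i = i := rfl
    omega

/-- A stage after which marker `j` no longer moves (meaningful when `j` moves
only finitely often). -/
noncomputable def stab (j : ℕ) : ℕ :=
  sSup {s | markerPos T (s + 1) j ≠ markerPos T s j} + 1

lemma pos_stab {j : ℕ} (hj : ¬ MovesInfinitely T j) :
    ∀ s, stab T j ≤ s → markerPos T s j = markerPos T (stab T j) j := by
  have hfin : {s | markerPos T (s + 1) j ≠ markerPos T s j}.Finite :=
    Set.not_infinite.mp hj
  intro s hs
  induction s with
  | zero =>
      have : stab T j = 0 := Nat.le_zero.mp hs
      rw [this]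
  | succ n ih =>
      rcases Nat.lt_or_ge n (stab T j) with h' | h'
      · have : stab T j = n + 1 := by omega
        rw [this]
      · rw [← ih h']
        by_contra hne
        have hn : n ∈ {s | markerPos T (s + 1) j ≠ markerPos T s j} := hne
        have h2 := le_csSup hfin.bddAbove hn
        have : stab T j = sSup {s | markerPos T (s + 1) j ≠ markerPos T s j} + 1 := rfl
        omega

/-- The eventual (limit) position of marker `j`. -/
noncomputable def limitPos (j : ℕ) : ℕ := markerPos T (stab T j) j

lemma limit_occupied {j : ℕ} (hj1 : 1 ≤ j) (hj : ¬ MovesInfinitely T j) (s : ℕ) :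
    Occupied T s (limitPos T j) := by
  have h := pos_stab T hj (max (stab T j) s) (le_max_left _ _)
  exact occupied_of_le T (le_max_right (stab T j) s) ⟨j, hj1, h⟩

lemma limit_lt {j j' : ℕ} (hj : ¬ MovesInfinitely T j) (hj' : ¬ MovesInfinitely T j')
    (h : j < j') : limitPos T j < limitPos T j' := by
  have e1 := pos_stab T hj (max (stab T j) (stab T j')) (le_max_left _ _)
  have e2 := pos_stab T hj' (max (stab T j) (stab T j')) (le_max_right _ _)
  rw [limitPos, limitPos, ← e1, ← e2]
  exact strictMonoPos T _ h

lemma exists_limit {p : ℕ} (hp : ∀ s, Occupied T s p) :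
    ∃ j, 1 ≤ j ∧ ¬ MovesInfinitely T j ∧ limitPos T j = p := by
  choose f hf1 hf2 using hp
  have hanti : ∀ s, f (s + 1) ≤ f s := by
    intro s
    have h1 : markerPos T s
        (f (s + 1) + ((Finset.Icc 1 (f (s + 1))).filter (fun t => T t (s + 1))).card)
        = markerPos T s (f s) := by
      rw [← markerPos_succ, hf2, hf2]
    have := (strictMonoPos T s).injective h1
    omega
  have hanti' : ∀ s s', s ≤ s' → f s' ≤ f s := by
    intro s s' h
    induction s' with
    | zero =>
        have : s = 0 := Nat.le_zero.mp h
        rw [this]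
    | succ n ih =>
        rcases Nat.lt_or_ge s (n + 1) with h' | h'
        · exact le_trans (hanti n) (ih (by omega))
        · have : s = n + 1 := by omega
          rw [this]
  obtain ⟨s₀, hs₀⟩ : ∃ s₀, f s₀ = sInf (Set.range f) := by
    obtain ⟨s₀, h⟩ := Nat.sInf_mem (Set.range_nonempty f)
    exact ⟨s₀, h⟩
  set j := f s₀ with hj
  have hconst : ∀ s, s₀ ≤ s → f s = j := by
    intro s hs
    have h1 : f s ≤ j := hanti' s₀ s hs
    have h2 : j ≤ f s :=
      le_trans (le_of_eq hs₀) (Nat.sInf_le ⟨s, rfl⟩)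
    omega
  have hstable : ∀ s, s₀ ≤ s → markerPos T s j = p := by
    intro s hs
    rw [← hconst s hs]
    exact hf2 s
  have hnotinf : ¬ MovesInfinitely T j := by
    intro hinf
    have hsub : {s | markerPos T (s + 1) j ≠ markerPos T s j} ⊆ Set.Iio s₀ := by
      intro s hs
      by_contra hlt
      have hle : s₀ ≤ s := by simpa [Set.mem_Iio] using hlt
      exact hs (by rw [hstable (s + 1) (by omega), hstable s hle])
    exact ((Set.finite_Iio s₀).subset hsub).not_infinite hinf
  refine ⟨j, hf1 s₀, hnotinf, ?_⟩
  have h1 := pos_stab T hnotinf (max (stab T j) s₀) (le_max_left _ _)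
  rw [limitPos, ← h1]
  exact hstable _ (le_max_right _ _)

lemma C_eq_image {N₀ : ℕ} (hN : IsLeast {i : ℕ | 1 ≤ i ∧ MovesInfinitely T i} N₀) :
    {p : ℕ | 1 ≤ p ∧ p ∉ markerW T} = limitPos T '' (Set.Icc 1 (N₀ - 1)) := by
  obtain ⟨⟨hN1, hNinf⟩, hleast⟩ := hN
  rw [C_eq]
  ext p
  simp only [Set.mem_setOf_eq, Set.mem_image, Set.mem_Icc]
  constructor
  · intro hp
    obtain ⟨j, hj1, hjninf, hjp⟩ := exists_limit T hp
    refine ⟨j, ⟨hj1, ?_⟩, hjp⟩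
    by_contra h
    push_neg at h
    exact hjninf (movesInf_mono T (by omega) hNinf)
  · rintro ⟨j, ⟨hj1, hj2⟩, rfl⟩
    intro s
    refine limit_occupied T hj1 (fun hinf => ?_) s
    have := hleast ⟨hj1, hinf⟩
    omega

lemma not_inf_of_le {N₀ : ℕ} (hN : IsLeast {i : ℕ | 1 ≤ i ∧ MovesInfinitely T i} N₀)
    {j : ℕ} (hj1 : 1 ≤ j) (hj2 : j ≤ N₀ - 1) : ¬ MovesInfinitely T j := by
  intro hinf
  have h1 := hN.2 ⟨hj1, hinf⟩
  have h2 := hN.1.1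
  omega

end MarkerAux

/-- Marker lemma (Proposition 3.3 of the paper): for any triggering rule `T`
(where marker `i` may be triggered at stage `s` only if `i ≤ s`), the
complement `ℕ \ W` (within the cells `1, 2, 3, …`) is finite if and only if
some marker moves infinitely often; and if `N₀` is the least index of a marker
moving infinitely often, then `|ℕ \ W| = N₀ - 1`. -/
theorem marker_lemma (T : ℕ → ℕ → Prop) (hT : ∀ i s, T i s → 1 ≤ i ∧ i ≤ s) :
    ({p : ℕ | 1 ≤ p ∧ p ∉ markerW T}.Finite ↔
      ∃ i, 1 ≤ i ∧ MovesInfinitely T i) ∧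
    ∀ N₀ : ℕ, IsLeast {i : ℕ | 1 ≤ i ∧ MovesInfinitely T i} N₀ →
      {p : ℕ | 1 ≤ p ∧ p ∉ markerW T}.ncard = N₀ - 1 := by
  constructor
  · constructor
    · intro hfin
      by_contra h
      push_neg at h
      have hmono : StrictMonoOn (MarkerAux.limitPos T) (Set.Ici 1) :=
        fun a ha b hb hab => MarkerAux.limit_lt T (h a ha) (h b hb) hab
      have himg : (MarkerAux.limitPos T '' Set.Ici 1).Infinite :=
        Set.Infinite.image hmono.injOn (Set.Ici_infinite 1)
      refine absurd (hfin.subset ?_) himg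
      rintro p ⟨j, hj, rfl⟩
      have hocc := MarkerAux.limit_occupied T hj (h j hj)
      rw [MarkerAux.C_eq T]
      exact hocc
    · rintro ⟨i, hi⟩
      have hne : {i : ℕ | 1 ≤ i ∧ MovesInfinitely T i}.Nonempty := ⟨i, hi⟩
      have hleast : IsLeast {i : ℕ | 1 ≤ i ∧ MovesInfinitely T i}
          (sInf {i : ℕ | 1 ≤ i ∧ MovesInfinitely T i}) :=
        ⟨Nat.sInf_mem hne, fun _ hb => Nat.sInf_le hb⟩
      rw [MarkerAux.C_eq_image T hleast]
      exact (Set.finite_Icc _ _).image _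
  · intro N₀ hN
    rw [MarkerAux.C_eq_image T hN]
    have hinj : Set.InjOn (MarkerAux.limitPos T) (Set.Icc 1 (N₀ - 1)) := by
      have hsm : StrictMonoOn (MarkerAux.limitPos T) (Set.Icc 1 (N₀ - 1)) :=
        fun a ha b hb hab =>
          MarkerAux.limit_lt T (MarkerAux.not_inf_of_le T hN ha.1 ha.2)
            (MarkerAux.not_inf_of_le T hN hb.1 hb.2) hab
      exact hsm.injOn
    rw [Set.ncard_image_of_injOn hinj, ← Finset.coe_Icc, Set.ncard_coe_finset,
      Nat.card_Icc]
    omega
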